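/- arXiv:2204.10861 — 3 statements merged into one kernel-verified Lean document; each statement's English description precedes it below -/
import Mathlib

section
/- Let N be a G-graded near-ring and P a graded ideal of N with P² ≠ {0}. Then P is a graded prime ideal of N if and only if P is a graded weakly prime ideal of N. -/
open Pointwise

/-- A (right) near-ring: an additive group (not necessarily abelian) with an
associative multiplication that is right distributive over addition. -/
class NearRing (N : Type*) extends AddGroup N, Semigroup N where
  right_distrib : ∀ a b c : N, (a + b) * c = a * c + b * c

/-- A (two-sided) ideal of a near-ring. -/
structure NearRingIdeal (N : Type*) [NearRing N] where
  carrier : AddSubgroup N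
  normal : carrier.Normal
  mul_mem_right : ∀ i n : N, i ∈ carrier → i * n ∈ carrier
  quasi_left : ∀ m n i : N, i ∈ carrier → m * (n + i) - m * n ∈ carrier

instance (N : Type*) [NearRing N] : SetLike (NearRingIdeal N) N where
  coe I := I.carrier
  coe_injective := by
    rintro ⟨a, _, _, _⟩ ⟨b, _, _, _⟩ h
    congr
    exact SetLike.coe_injective h

/-- A `G`-grading on a near-ring `N`: a family of additive normal subgroups
whose internal direct sum is `N`, compatible with multiplication. -/
structure NearRingGrading (G : Type*) [Monoid G] (N : Type*) [NearRing N] where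
  component : G → AddSubgroup N
  normal : ∀ σ : G, (component σ).Normal
  mul_mem : ∀ σ τ : G, ∀ x ∈ component σ, ∀ y ∈ component τ, x * y ∈ component (σ * τ)
  span_top : (⨆ σ : G, component σ) = ⊤
  independent : ∀ σ : G, component σ ⊓ (⨆ τ ∈ ({σ}ᶜ : Set G), component τ) = ⊥

variable {G : Type*} [Monoid G] {N : Type*} [NearRing N]

/-- An ideal is graded if it is generated by its homogeneous elements. -/
def NearRingGrading.IsGradedIdeal (gr : NearRingGrading G N) (I : NearRingIdeal N) : Prop :=
  I.carrier = AddSubgroup.closure ((I : Set N) ∩ ⋃ σ : G, (gr.component σ : Set N))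

/-- The product `IJ` of two ideals, as the set of products of their elements. -/
def idealProd (I J : NearRingIdeal N) : Set N := (I : Set N) * (J : Set N)

/-- A graded prime ideal of a graded near-ring. -/
def NearRingGrading.IsGradedPrime (gr : NearRingGrading G N) (P : NearRingIdeal N) : Prop :=
  gr.IsGradedIdeal P ∧ ∀ I J : NearRingIdeal N, gr.IsGradedIdeal I → gr.IsGradedIdeal J →
    idealProd I J ⊆ (P : Set N) → (I : Set N) ⊆ (P : Set N) ∨ (J : Set N) ⊆ (P : Set N)

/-- A graded weakly prime ideal of a graded near-ring. -/
def NearRingGrading.IsGradedWeaklyPrime (gr : NearRingGrading G N) (P : NearRingIdeal N) : Prop :=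
  gr.IsGradedIdeal P ∧ ∀ I J : NearRingIdeal N, gr.IsGradedIdeal I → gr.IsGradedIdeal J →
    idealProd I J ≠ {0} → idealProd I J ⊆ (P : Set N) →
      (I : Set N) ⊆ (P : Set N) ∨ (J : Set N) ⊆ (P : Set N)

/-- A graded almost prime ideal of a graded near-ring. -/
def NearRingGrading.IsGradedAlmostPrime (gr : NearRingGrading G N) (P : NearRingIdeal N) : Prop :=
  gr.IsGradedIdeal P ∧ ∀ I J : NearRingIdeal N, gr.IsGradedIdeal I → gr.IsGradedIdeal J →
    idealProd I J ⊆ (P : Set N) → ¬ idealProd I J ⊆ idealProd P P →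
      (I : Set N) ⊆ (P : Set N) ∨ (J : Set N) ⊆ (P : Set N)

/-! ### Auxiliary material -/

lemma NearRing.zero_mul' (a : N) : (0 : N) * a = 0 := by
  have h := NearRing.right_distrib (0 : N) 0 a
  rw [add_zero] at h
  exact left_eq_add.mp h

lemma NearRing.neg_mul' (a b : N) : (-a) * b = -(a * b) := by
  have h := NearRing.right_distrib a (-a) b
  rw [add_neg_cancel, NearRing.zero_mul'] at h
  exact (neg_eq_of_add_eq_zero_right h.symm).symm

/-- The join of two near-ring ideals. -/
def nrIdealSup (A B : NearRingIdeal N) : NearRingIdeal N where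
  carrier := A.carrier ⊔ B.carrier
  normal := by
    haveI := A.normal
    haveI := B.normal
    exact AddSubgroup.sup_normal A.carrier B.carrier
  mul_mem_right := by
    intro i n hi
    haveI := B.normal
    have h : i ∈ ((A.carrier ⊔ B.carrier : AddSubgroup N) : Set N) := hi
    rw [AddSubgroup.add_normal] at h
    obtain ⟨p, hp, q, hq, rfl⟩ := Set.mem_add.mp h
    rw [NearRing.right_distrib]
    exact add_mem (AddSubgroup.mem_sup_left (A.mul_mem_right p n hp))
      (AddSubgroup.mem_sup_right (B.mul_mem_right q n hq))
  quasi_left := by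
    intro m n i hi
    haveI := B.normal
    have h : i ∈ ((A.carrier ⊔ B.carrier : AddSubgroup N) : Set N) := hi
    rw [AddSubgroup.add_normal] at h
    obtain ⟨p, hp, q, hq, rfl⟩ := Set.mem_add.mp h
    have key : m * (n + (p + q)) - m * n
        = (m * ((n + p) + q) - m * (n + p)) + (m * (n + p) - m * n) := by
      rw [sub_add_sub_cancel, add_assoc]
    rw [key]
    exact add_mem (AddSubgroup.mem_sup_right (B.quasi_left m (n + p) q hq))
      (AddSubgroup.mem_sup_left (A.quasi_left m n p hp))

lemma mem_nrIdealSup_rep {A B : NearRingIdeal N} {x : N}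
    (hx : x ∈ (nrIdealSup A B : Set N)) :
    ∃ p ∈ A.carrier, ∃ q ∈ B.carrier, x = p + q := by
  haveI := B.normal
  have h : x ∈ ((A.carrier ⊔ B.carrier : AddSubgroup N) : Set N) := hx
  rw [AddSubgroup.add_normal] at h
  obtain ⟨p, hp, q, hq, h⟩ := Set.mem_add.mp h
  exact ⟨p, hp, q, hq, h.symm⟩

lemma mem_nrIdealSup_left {A B : NearRingIdeal N} {x : N} (hx : x ∈ (A : Set N)) :
    x ∈ (nrIdealSup A B : Set N) :=
  AddSubgroup.mem_sup_left hx

lemma mem_nrIdealSup_right {A B : NearRingIdeal N} {x : N} (hx : x ∈ (B : Set N)) :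
    x ∈ (nrIdealSup A B : Set N) :=
  AddSubgroup.mem_sup_right hx

lemma isGraded_nrIdealSup (gr : NearRingGrading G N) {A B : NearRingIdeal N}
    (hA : gr.IsGradedIdeal A) (hB : gr.IsGradedIdeal B) :
    gr.IsGradedIdeal (nrIdealSup A B) := by
  unfold NearRingGrading.IsGradedIdeal at *
  apply le_antisymm
  · show A.carrier ⊔ B.carrier ≤ _
    apply sup_le
    · rw [hA]
      exact AddSubgroup.closure_mono (Set.inter_subset_inter_left _
        (fun x hx => mem_nrIdealSup_left hx))
    · rw [hB]
      exact AddSubgroup.closure_mono (Set.inter_subset_inter_left _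
        (fun x hx => mem_nrIdealSup_right hx))
  · rw [AddSubgroup.closure_le]
    exact Set.inter_subset_left

/-- For a graded ideal `P` with `P² ≠ {0}`, graded prime ↔ graded weakly prime. -/
theorem prime_iff_weaklyPrime_of_sq_ne_zero (gr : NearRingGrading G N) (P : NearRingIdeal N)
    (hP : gr.IsGradedIdeal P) (hsq : idealProd P P ≠ {0}) :
    gr.IsGradedPrime P ↔ gr.IsGradedWeaklyPrime P := by
  constructor
  · rintro ⟨h1, h2⟩
    exact ⟨h1, fun I J hI hJ _ hsub => h2 I J hI hJ hsub⟩
  · rintro ⟨h1, h2⟩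
    refine ⟨h1, fun I J hI hJ hIJ => ?_⟩
    by_cases hz : idealProd I J = {0}
    · -- the degenerate case `IJ = {0}`
      set K := nrIdealSup P I with hK
      set L := nrIdealSup J P with hL
      have hmulzero : ∀ a ∈ (I : Set N), ∀ b ∈ (J : Set N), a * b = 0 := by
        intro a ha b hb
        have : a * b ∈ idealProd I J := Set.mul_mem_mul ha hb
        rw [hz] at this
        exact this
      have hKL_sub : idealProd K L ⊆ (P : Set N) := by
        rintro z hzmem
        obtain ⟨x, hx, y, hy, rfl⟩ := Set.mem_mul.mp hzmem
        obtain ⟨p, hp, a, ha, rfl⟩ := mem_nrIdealSup_rep hx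
        obtain ⟨b, hb, q, hq, rfl⟩ := mem_nrIdealSup_rep hy
        rw [NearRing.right_distrib]
        show _ ∈ P.carrier
        apply add_mem
        · exact P.mul_mem_right p (b + q) hp
        · have hab : a * b = 0 := hmulzero a ha b hb
          have hq1 : a * (b + q) - a * b ∈ P.carrier := P.quasi_left a b q hq
          rw [hab, sub_zero] at hq1
          exact hq1
      have hKL_ne : idealProd K L ≠ {0} := by
        intro hKL0
        apply hsq
        apply Set.eq_of_subset_of_subset
        · intro w hw
          obtain ⟨p, hp, q, hq, rfl⟩ := Set.mem_mul.mp hw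
          have : p * q ∈ idealProd K L :=
            Set.mul_mem_mul (mem_nrIdealSup_left hp) (mem_nrIdealSup_right hq)
          rw [hKL0] at this
          exact this
        · intro w hw
          rw [Set.mem_singleton_iff] at hw
          subst hw
          have : (0 : N) * 0 ∈ idealProd P P :=
            Set.mul_mem_mul P.carrier.zero_mem P.carrier.zero_mem
          rwa [NearRing.zero_mul'] at this
      have hKg : gr.IsGradedIdeal K := isGraded_nrIdealSup gr hP hI
      have hLg : gr.IsGradedIdeal L := isGraded_nrIdealSup gr hJ hP
      rcases h2 K L hKg hLg hKL_ne hKL_sub with h | h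
      · exact Or.inl (fun x hx => h (mem_nrIdealSup_right hx))
      · exact Or.inr (fun x hx => h (mem_nrIdealSup_left hx))
    · exact h2 I J hI hJ hz hIJ
end

section
/- Let N and M be G-graded near-rings and φ : N → M a surjective graded near-ring homomorphism. If P is a graded weakly prime ideal of N containing ker(φ), then φ(P) is a graded weakly prime ideal of M. -/
open Pointwise

variable {G : Type*} [Monoid G] {N : Type*} [NearRing N]

/-- A homomorphism of near-rings. -/
structure NearRingHom (N M : Type*) [NearRing N] [NearRing M] where
  toFun : N → M
  map_add : ∀ x y : N, toFun (x + y) = toFun x + toFun y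
  map_mul : ∀ x y : N, toFun (x * y) = toFun x * toFun y

/-! ### Auxiliary machinery -/

theorem nearring_zero_mul {R : Type*} [NearRing R] (c : R) : (0 : R) * c = 0 := by
  have h : ((0 : R) + 0) * c = 0 * c + 0 * c := NearRing.right_distrib 0 0 c
  rw [zero_add] at h
  have h2 : (0 : R) * c + 0 = 0 * c + 0 * c := by rw [add_zero]; exact h
  exact (add_left_cancel h2).symm

/-- The additive monoid hom underlying a near-ring hom. -/
def NearRingHom.toAddHom' {N M : Type*} [NearRing N] [NearRing M] (φ : NearRingHom N M) :
    N →+ M :=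
  AddMonoidHom.mk' φ.toFun φ.map_add

@[simp] theorem NearRingHom.coe_toAddHom' {N M : Type*} [NearRing N] [NearRing M]
    (φ : NearRingHom N M) : ⇑φ.toAddHom' = φ.toFun := rfl

/-- Homogeneous elements of distinct degrees commute additively. -/
theorem NearRingGrading.commute_of_ne (gr : NearRingGrading G N) {σ τ : G} (hστ : σ ≠ τ)
    {x y : N} (hx : x ∈ gr.component σ) (hy : y ∈ gr.component τ) : AddCommute x y := by
  have hc1 : x + y + -x ∈ gr.component τ := (gr.normal τ).conj_mem y hy x
  have hc2 : y + -x + -y ∈ gr.component σ := (gr.normal σ).conj_mem (-x) (neg_mem hx) y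
  have h1 : x + y + -x + -y ∈ gr.component τ := by
    simpa [sub_eq_add_neg, add_assoc] using sub_mem hc1 hy
  have h2 : x + y + -x + -y ∈ gr.component σ := by
    simpa [add_assoc] using add_mem hx hc2
  have hbot : x + y + -x + -y ∈ (⊥ : AddSubgroup N) := by
    rw [← gr.independent σ]
    exact ⟨h2, AddSubgroup.mem_iSup_of_mem τ (AddSubgroup.mem_iSup_of_mem hστ.symm h1)⟩
  have h0 : x + y + -x + -y = 0 := AddSubgroup.mem_bot.mp hbot
  have h1' : x + y + -x = y := by
    have := congrArg (fun z => z + y) h0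
    simpa [add_assoc] using this
  show x + y = y + x
  calc x + y = x + y + -x + x := by simp [add_assoc]
    _ = y + x := by rw [h1']

theorem NearRingGrading.pairwise_comm (gr : NearRingGrading G N) {g : G → N}
    (hg : ∀ σ, g σ ∈ gr.component σ) (s : Finset G) :
    (s : Set G).Pairwise fun a b => AddCommute (g a) (g b) :=
  fun a _ b _ hab => gr.commute_of_ne hab (hg a) (hg b)

/-- If a noncommutative sum of homogeneous elements is zero, each term is zero. -/
theorem NearRingGrading.noncommSum_eq_zero_apply (gr : NearRingGrading G N)
    {s : Finset G} {g : G → N} (hg : ∀ σ, g σ ∈ gr.component σ) (comm)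
    (hsum : Finset.noncommSum s g comm = 0) {τ : G} (hτ : τ ∈ s) : g τ = 0 := by
  classical
  have h1 : Finset.noncommSum s g comm
      = Finset.noncommSum (insert τ (s.erase τ)) g (gr.pairwise_comm hg _) :=
    Finset.noncommSum_congr (Finset.insert_erase hτ).symm (fun _ _ => rfl) _
  rw [Finset.noncommSum_insert_of_notMem _ _ _ _ (Finset.notMem_erase τ s)] at h1
  have hEmem : Finset.noncommSum (s.erase τ) g (gr.pairwise_comm hg _) ∈
      ⨆ ρ ∈ ({τ}ᶜ : Set G), gr.component ρ :=
    AddSubgroup.noncommSum_mem _ _ fun ρ hρ =>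
      AddSubgroup.mem_iSup_of_mem ρ
        (AddSubgroup.mem_iSup_of_mem (Finset.ne_of_mem_erase hρ) (hg ρ))
  have hadd : g τ + Finset.noncommSum (s.erase τ) g (gr.pairwise_comm hg _) = 0 :=
    h1.symm.trans hsum
  have hgτ : g τ = -(Finset.noncommSum (s.erase τ) g (gr.pairwise_comm hg _)) :=
    eq_neg_of_add_eq_zero_left hadd
  have hmem : g τ ∈ gr.component τ ⊓ ⨆ ρ ∈ ({τ}ᶜ : Set G), gr.component ρ :=
    AddSubgroup.mem_inf.mpr ⟨hg τ, by rw [hgτ]; exact neg_mem hEmem⟩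
  rw [gr.independent τ] at hmem
  exact AddSubgroup.mem_bot.mp hmem

theorem NearRingGrading.noncommSum_subset (gr : NearRingGrading G N) {g : G → N}
    (hg : ∀ σ, g σ ∈ gr.component σ) {s u : Finset G} (hsu : s ⊆ u)
    (h0 : ∀ σ ∈ u, σ ∉ s → g σ = 0) :
    Finset.noncommSum u g (gr.pairwise_comm hg u)
      = Finset.noncommSum s g (gr.pairwise_comm hg s) := by
  classical
  have h1 : Finset.noncommSum u g (gr.pairwise_comm hg u)
      = Finset.noncommSum (s ∪ (u \ s)) g (gr.pairwise_comm hg _) :=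
    Finset.noncommSum_congr (Finset.union_sdiff_of_subset hsu).symm (fun _ _ => rfl) _
  rw [h1, Finset.noncommSum_union_of_disjoint Finset.disjoint_sdiff g _,
    Finset.noncommSum_eq_card_nsmul (u \ s) g _ (0 : N)
      (fun σ hσ => h0 σ (Finset.mem_sdiff.mp hσ).1 (Finset.mem_sdiff.mp hσ).2)]
  simp

theorem NearRingGrading.ite_mem (gr : NearRingGrading G N) [DecidableEq G] (s : Finset G)
    {f : G → N} (hf : ∀ σ, f σ ∈ gr.component σ) (σ : G) :
    (if σ ∈ s then f σ else 0) ∈ gr.component σ := by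
  split
  · exact hf σ
  · exact zero_mem _

theorem NearRingGrading.noncommSum_extend (gr : NearRingGrading G N) [DecidableEq G]
    {f : G → N} (hf : ∀ σ, f σ ∈ gr.component σ) {s u : Finset G} (hsu : s ⊆ u) :
    Finset.noncommSum u (fun σ => if σ ∈ s then f σ else 0)
        (gr.pairwise_comm (gr.ite_mem s hf) u)
      = Finset.noncommSum s f (gr.pairwise_comm hf s) := by
  rw [gr.noncommSum_subset (gr.ite_mem s hf) hsu (fun σ _ hσ => if_neg hσ)]
  exact Finset.noncommSum_congr rfl (fun σ hσ => if_pos hσ) _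

/-- Every element decomposes as a noncommutative sum of homogeneous elements. -/
theorem NearRingGrading.exists_decomp (gr : NearRingGrading G N) (x : N) :
    ∃ (s : Finset G) (g : G → N) (hg : ∀ σ, g σ ∈ gr.component σ),
      x = Finset.noncommSum s g (gr.pairwise_comm hg s) := by
  classical
  have hx : x ∈ ⨆ σ, gr.component σ := by rw [gr.span_top]; exact AddSubgroup.mem_top x
  refine @AddSubgroup.iSup_induction N _ G gr.component
    (fun y => ∃ (s : Finset G) (g : G → N) (hg : ∀ σ, g σ ∈ gr.component σ),
      y = Finset.noncommSum s g (gr.pairwise_comm hg s)) x hx ?_ ?_ ?_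
  · intro σ z hz
    refine ⟨{σ}, fun τ => if τ = σ then z else 0, fun τ => ?_, by simp⟩
    show (if τ = σ then z else 0) ∈ gr.component τ
    by_cases h : τ = σ
    · subst h; simpa using hz
    · rw [if_neg h]; exact zero_mem _
  · exact ⟨∅, fun _ => 0, fun σ => zero_mem _, by simp⟩
  · rintro a b ⟨s, f, hf, rfl⟩ ⟨t, g, hgm, rfl⟩
    refine ⟨s ∪ t,
      (fun σ => if σ ∈ s then f σ else 0) + (fun σ => if σ ∈ t then g σ else 0),
      fun σ => add_mem (gr.ite_mem s hf σ) (gr.ite_mem t hgm σ), ?_⟩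
    have hdist := Finset.noncommSum_add_distrib (s := s ∪ t)
      (fun σ => if σ ∈ s then f σ else 0) (fun σ => if σ ∈ t then g σ else 0)
      (gr.pairwise_comm (gr.ite_mem s hf) _) (gr.pairwise_comm (gr.ite_mem t hgm) _)
      (fun a ha b hb hab => gr.commute_of_ne hab (gr.ite_mem t hgm a) (gr.ite_mem s hf b))
    rw [gr.noncommSum_extend hf Finset.subset_union_left,
      gr.noncommSum_extend hgm Finset.subset_union_right] at hdist
    exact hdist.symm

/-- A surjective graded hom maps each component onto the corresponding component. -/
theorem NearRingGrading.map_component_eq {M : Type*} [NearRing M] (grN : NearRingGrading G N)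
    (grM : NearRingGrading G M) (φ' : N →+ M) (hsurj : Function.Surjective φ')
    (hgr : ∀ σ, AddSubgroup.map φ' (grN.component σ) ≤ grM.component σ) (σ : G) :
    AddSubgroup.map φ' (grN.component σ) = grM.component σ := by
  refine le_antisymm (hgr σ) fun y hy => ?_
  have htop : (⊤ : AddSubgroup M) ≤ AddSubgroup.map φ' (grN.component σ)
      ⊔ ⨆ τ ∈ ({σ}ᶜ : Set G), grM.component τ := by
    rw [← AddSubgroup.map_top_of_surjective φ' hsurj, ← grN.span_top, AddSubgroup.map_iSup]
    refine iSup_le fun τ => ?_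
    rcases eq_or_ne τ σ with rfl | h
    · exact le_sup_left
    · exact le_trans (hgr τ)
        (le_trans (le_iSup₂ (f := fun (ρ : G) (_ : ρ ∈ ({σ}ᶜ : Set G)) => grM.component ρ) τ h)
          le_sup_right)
  haveI hnorm : (AddSubgroup.map φ' (grN.component σ)).Normal := (grN.normal σ).map φ' hsurj
  have hmem : y ∈ (↑(AddSubgroup.map φ' (grN.component σ)
      ⊔ ⨆ τ ∈ ({σ}ᶜ : Set G), grM.component τ) : Set M) := htop (AddSubgroup.mem_top y)
  rw [AddSubgroup.normal_add, Set.mem_add] at hmem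
  obtain ⟨a, ha, b, hb, hab⟩ := hmem
  have haσ : a ∈ grM.component σ := hgr σ ha
  have hbσ : b ∈ grM.component σ := by
    have hb' : b = -a + y := by rw [← hab]; simp [add_assoc]
    rw [hb']; exact add_mem (neg_mem haσ) hy
  have hb0 : b ∈ (⊥ : AddSubgroup M) := by
    rw [← grM.independent σ]; exact ⟨hbσ, hb⟩
  rw [AddSubgroup.mem_bot] at hb0
  rw [← hab, hb0, add_zero]
  exact ha

/-- Elements of the kernel belong to any subgroup containing all the homogeneous
elements of the kernel. -/
theorem NearRingGrading.ker_mem {M : Type*} [NearRing M] (grN : NearRingGrading G N)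
    (grM : NearRingGrading G M) (φ' : N →+ M)
    (hgr : ∀ σ, AddSubgroup.map φ' (grN.component σ) ≤ grM.component σ)
    (T : AddSubgroup N) (hT : ∀ σ, ∀ z ∈ grN.component σ, φ' z = 0 → z ∈ T)
    {x : N} (hx : φ' x = 0) : x ∈ T := by
  obtain ⟨s, g, hg, rfl⟩ := grN.exists_decomp x
  have hgM : ∀ σ, φ' (g σ) ∈ grM.component σ := fun σ =>
    hgr σ (AddSubgroup.mem_map.mpr ⟨g σ, hg σ, rfl⟩)
  have hmap : Finset.noncommSum s (fun σ => φ' (g σ)) (grM.pairwise_comm hgM s) = 0 := by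
    rw [← Finset.map_noncommSum s g (grN.pairwise_comm hg s) φ']
    exact hx
  refine AddSubgroup.noncommSum_mem T (grN.pairwise_comm hg s) fun τ hτ =>
    hT τ (g τ) (hg τ) ?_
  exact grM.noncommSum_eq_zero_apply hgM (grM.pairwise_comm hgM s) hmap hτ

/-- The preimage of a graded additive subgroup is graded. -/
theorem NearRingGrading.comap_graded {M : Type*} [NearRing M] (grN : NearRingGrading G N)
    (grM : NearRingGrading G M) (φ' : N →+ M) (hsurj : Function.Surjective φ')
    (hgr : ∀ σ, AddSubgroup.map φ' (grN.component σ) ≤ grM.component σ)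
    (K : AddSubgroup M)
    (hK : K = AddSubgroup.closure ((K : Set M) ∩ ⋃ σ : G, (grM.component σ : Set M))) :
    AddSubgroup.comap φ' K
      = AddSubgroup.closure
          ((AddSubgroup.comap φ' K : Set N) ∩ ⋃ σ : G, (grN.component σ : Set N)) := by
  refine le_antisymm ?_ ((AddSubgroup.closure_le _).mpr Set.inter_subset_left)
  intro x hx
  set T := AddSubgroup.closure
    ((AddSubgroup.comap φ' K : Set N) ∩ ⋃ σ : G, (grN.component σ : Set N)) with hTdef
  have hgen : ∀ σ, ∀ z ∈ grN.component σ, φ' z ∈ K → z ∈ T := by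
    intro σ z hz hzK
    rw [hTdef]
    exact AddSubgroup.subset_closure ⟨hzK, Set.mem_iUnion.mpr ⟨σ, hz⟩⟩
  have hKmap : K ≤ AddSubgroup.map φ' T := by
    conv_lhs => rw [hK]
    refine (AddSubgroup.closure_le _).mpr ?_
    rintro y ⟨hyK, hyU⟩
    obtain ⟨σ, hyσ⟩ := Set.mem_iUnion.mp hyU
    have hymem : y ∈ AddSubgroup.map φ' (grN.component σ) := by
      rw [grN.map_component_eq grM φ' hsurj hgr σ]; exact hyσ
    obtain ⟨z, hzσ, rfl⟩ := AddSubgroup.mem_map.mp hymem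
    exact AddSubgroup.mem_map.mpr ⟨z, hgen σ z hzσ hyK, rfl⟩
  obtain ⟨t, htT, hteq⟩ := AddSubgroup.mem_map.mp (hKmap hx)
  have hxt : φ' (x - t) = 0 := by rw [map_sub, hteq, sub_self]
  have hker : x - t ∈ T := grN.ker_mem grM φ' hgr T
    (fun σ z hz hz0 => hgen σ z hz (by rw [hz0]; exact K.zero_mem)) hxt
  have hxT := add_mem hker htT
  simpa using hxT

/-- The preimage ideal of a near-ring ideal along a near-ring hom. -/
def comapIdeal {M : Type*} [NearRing M] (φ : NearRingHom N M) (K : NearRingIdeal M) :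
    NearRingIdeal N where
  carrier := AddSubgroup.comap φ.toAddHom' K.carrier
  normal := K.normal.comap _
  mul_mem_right := fun i n hi => by
    show φ.toFun (i * n) ∈ K.carrier
    rw [φ.map_mul]
    exact K.mul_mem_right _ _ hi
  quasi_left := fun m n i hi => by
    have key : φ.toFun (m * (n + i) - m * n)
        = φ.toFun m * (φ.toFun n + φ.toFun i) - φ.toFun m * φ.toFun n := by
      have h1 := map_sub φ.toAddHom' (m * (n + i)) (m * n)
      rw [NearRingHom.coe_toAddHom'] at h1
      rw [h1, φ.map_mul, φ.map_mul, φ.map_add]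
    show φ.toFun (m * (n + i) - m * n) ∈ K.carrier
    rw [key]
    exact K.quasi_left _ _ _ hi
/-- The image under a surjective graded homomorphism of a graded weakly
prime ideal containing the kernel is a graded weakly prime ideal. -/
theorem image_weaklyPrime {M : Type*} [NearRing M]
    (grN : NearRingGrading G N) (grM : NearRingGrading G M)
    (φ : NearRingHom N M) (hsurj : Function.Surjective φ.toFun)
    (hgr : ∀ σ : G, φ.toFun '' (grN.component σ : Set N) ⊆ (grM.component σ : Set M))
    (P : NearRingIdeal N) (hwp : grN.IsGradedWeaklyPrime P)
    (hker : {x : N | φ.toFun x = 0} ⊆ (P : Set N)) :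
    ∃ Q : NearRingIdeal M, (Q : Set M) = φ.toFun '' (P : Set N) ∧
      grM.IsGradedWeaklyPrime Q := by
  classical
  have hsurj' : Function.Surjective ⇑φ.toAddHom' := hsurj
  have hgr' : ∀ σ, AddSubgroup.map φ.toAddHom' (grN.component σ) ≤ grM.component σ := by
    intro σ y hy
    obtain ⟨x, hx, rfl⟩ := AddSubgroup.mem_map.mp hy
    exact hgr σ ⟨x, hx, rfl⟩
  have hmul : ∀ x y : N, φ.toAddHom' (x * y) = φ.toAddHom' x * φ.toAddHom' y := φ.map_mul
  refine ⟨{ carrier := AddSubgroup.map φ.toAddHom' P.carrier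
            normal := P.normal.map φ.toAddHom' hsurj'
            mul_mem_right := ?_
            quasi_left := ?_ }, ?_, ?_, ?_⟩
  · -- mul_mem_right
    intro i m hi
    obtain ⟨a, ha, rfl⟩ := AddSubgroup.mem_map.mp hi
    obtain ⟨b, rfl⟩ := hsurj' m
    refine AddSubgroup.mem_map.mpr ⟨a * b, P.mul_mem_right a b ha, ?_⟩
    exact hmul a b
  · -- quasi_left
    intro m n i hi
    obtain ⟨c, hc, rfl⟩ := AddSubgroup.mem_map.mp hi
    obtain ⟨a, rfl⟩ := hsurj' m
    obtain ⟨b, rfl⟩ := hsurj' n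
    refine AddSubgroup.mem_map.mpr ⟨a * (b + c) - a * b, P.quasi_left a b c hc, ?_⟩
    rw [map_sub, hmul, hmul, map_add]
  · -- carrier description
    show (↑(AddSubgroup.map φ.toAddHom' P.carrier) : Set M) = φ.toFun '' (P : Set N)
    rw [AddSubgroup.coe_map, NearRingHom.coe_toAddHom']
    rfl
  · -- graded
    have hP : P.carrier
        = AddSubgroup.closure ((P : Set N) ∩ ⋃ σ : G, (grN.component σ : Set N)) := hwp.1
    show AddSubgroup.map φ.toAddHom' P.carrier
        = AddSubgroup.closure ((↑(AddSubgroup.map φ.toAddHom' P.carrier) : Set M)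
            ∩ ⋃ σ : G, (grM.component σ : Set M))
    refine le_antisymm ?_ ((AddSubgroup.closure_le _).mpr Set.inter_subset_left)
    conv_lhs => rw [hP]
    rw [AddMonoidHom.map_closure]
    refine AddSubgroup.closure_mono ?_
    rintro y ⟨x, ⟨hxP, hxU⟩, rfl⟩
    obtain ⟨σ, hxσ⟩ := Set.mem_iUnion.mp hxU
    refine ⟨AddSubgroup.mem_map.mpr ⟨x, hxP, rfl⟩, Set.mem_iUnion.mpr ⟨σ, ?_⟩⟩
    exact hgr' σ (AddSubgroup.mem_map.mpr ⟨x, hxσ, rfl⟩)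
  · -- weakly prime condition
    intro I' J' hI' hJ' hne hsub
    set I : NearRingIdeal N := comapIdeal φ I' with hIdef
    set J : NearRingIdeal N := comapIdeal φ J' with hJdef
    have hIg : grN.IsGradedIdeal I :=
      grN.comap_graded grM φ.toAddHom' hsurj' hgr' I'.carrier hI'
    have hJg : grN.IsGradedIdeal J :=
      grN.comap_graded grM φ.toAddHom' hsurj' hgr' J'.carrier hJ'
    have hIJP : idealProd I J ⊆ (P : Set N) := by
      rintro z ⟨a, ha, b, hb, rfl⟩
      have h1 : φ.toFun a ∈ (I' : Set M) := ha
      have h2 : φ.toFun b ∈ (J' : Set M) := hb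
      have h3 : φ.toFun a * φ.toFun b ∈ idealProd I' J' := Set.mul_mem_mul h1 h2
      obtain ⟨p, hp, hpe⟩ := AddSubgroup.mem_map.mp (hsub h3)
      have h5 : φ.toFun (a * b - p) = 0 := by
        show φ.toAddHom' (a * b - p) = 0
        rw [map_sub, show φ.toAddHom' (a * b) = φ.toAddHom' p from
          (hmul a b).trans hpe.symm, sub_self]
      have h7 : a * b - p ∈ P.carrier := hker h5
      have h8 := add_mem h7 hp
      exact (by simpa using h8 : a * b ∈ P.carrier)
    have hIJne : idealProd I J ≠ {0} := by
      intro h0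
      apply hne
      apply Set.Subset.antisymm
      · rintro w ⟨a', ha', b', hb', rfl⟩
        obtain ⟨a, rfl⟩ := hsurj a'
        obtain ⟨b, rfl⟩ := hsurj b'
        have haI : a ∈ (I : Set N) := ha'
        have hbJ : b ∈ (J : Set N) := hb'
        have hab : a * b ∈ idealProd I J := Set.mul_mem_mul haI hbJ
        rw [h0, Set.mem_singleton_iff] at hab
        rw [Set.mem_singleton_iff]
        show φ.toFun a * φ.toFun b = 0
        rw [← φ.map_mul, hab]
        exact map_zero φ.toAddHom'
      · intro w hw
        rw [Set.mem_singleton_iff] at hw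
        subst hw
        have : (0 : M) * 0 ∈ idealProd I' J' :=
          Set.mul_mem_mul I'.carrier.zero_mem J'.carrier.zero_mem
        simpa [nearring_zero_mul] using this
    rcases hwp.2 I J hIg hJg hIJne hIJP with hIP | hJP
    · left
      intro y hy
      obtain ⟨x, rfl⟩ := hsurj y
      have hxI : x ∈ (I : Set N) := hy
      exact AddSubgroup.mem_map.mpr ⟨x, hIP hxI, rfl⟩
    · right
      intro y hy
      obtain ⟨x, rfl⟩ := hsurj y
      have hxJ : x ∈ (J : Set N) := hy
      exact AddSubgroup.mem_map.mpr ⟨x, hJP hxJ, rfl⟩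
end

section
/- Let N be a G-graded near-ring and P a graded ideal of N. If P is a graded almost prime ideal of N and (P² : P) = {x ∈ N : xP ⊆ P²} is contained in P, then P is a graded prime ideal of N. -/
open Pointwise

variable {G : Type*} [Monoid G] {N : Type*} [NearRing N]

/-- Auxiliary: the sub-add-sub cancellation in a (possibly non-abelian) additive group. -/
private lemma aux_sub_add_sub {a b c : N} : (a - b) + (b - c) = a - c := by
  simp [sub_eq_add_neg, add_assoc]

/-- Auxiliary: the sum of two near-ring ideals is a near-ring ideal. -/
def nearRingIdealSup (J P : NearRingIdeal N) : NearRingIdeal N where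
  carrier := J.carrier ⊔ P.carrier
  normal := by
    haveI := J.normal; haveI := P.normal
    exact AddSubgroup.sup_normal J.carrier P.carrier
  mul_mem_right := by
    haveI := P.normal
    intro i n hi
    rw [← SetLike.mem_coe, AddSubgroup.add_normal] at hi
    obtain ⟨j, hj, p, hp, rfl⟩ := hi
    rw [NearRing.right_distrib]
    exact AddSubgroup.add_mem_sup (J.mul_mem_right j n hj) (P.mul_mem_right p n hp)
  quasi_left := by
    haveI := P.normal
    intro m n i hi
    rw [← SetLike.mem_coe, AddSubgroup.add_normal] at hi
    obtain ⟨j, hj, p, hp, rfl⟩ := hi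
    have h1 : m * ((n + j) + p) - m * (n + j) ∈ P.carrier := P.quasi_left m (n + j) p hp
    have h2 : m * (n + j) - m * n ∈ J.carrier := J.quasi_left m n j hj
    have : (m * ((n + j) + p) - m * (n + j)) + (m * (n + j) - m * n)
        = m * (n + (j + p)) - m * n := by
      rw [aux_sub_add_sub, add_assoc]
    rw [← this]
    exact AddSubgroup.add_mem _ (AddSubgroup.mem_sup_right h1) (AddSubgroup.mem_sup_left h2)

/-- Auxiliary: the sum of graded ideals is graded. -/
lemma isGradedIdeal_sup (gr : NearRingGrading G N) (J P : NearRingIdeal N)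
    (hJ : gr.IsGradedIdeal J) (hP : gr.IsGradedIdeal P) :
    gr.IsGradedIdeal (nearRingIdealSup J P) := by
  unfold NearRingGrading.IsGradedIdeal at *
  set U : Set N := ⋃ σ : G, (gr.component σ : Set N) with hU
  apply le_antisymm
  · show J.carrier ⊔ P.carrier ≤ _
    rw [hJ, hP, ← AddSubgroup.closure_union]
    apply AddSubgroup.closure_mono
    apply Set.union_subset
    · exact Set.inter_subset_inter_left U fun x hx =>
        show x ∈ J.carrier ⊔ P.carrier from AddSubgroup.mem_sup_left hx
    · exact Set.inter_subset_inter_left U fun x hx =>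
        show x ∈ J.carrier ⊔ P.carrier from AddSubgroup.mem_sup_right hx
  · exact (AddSubgroup.closure_le _).2 Set.inter_subset_left

/-- If `P` is graded almost prime and `(P² : P) ⊆ P`, then `P` is graded prime. -/
theorem almostPrime_colon_subset_imp_prime (gr : NearRingGrading G N) (P : NearRingIdeal N)
    (hap : gr.IsGradedAlmostPrime P)
    (hcolon : {x : N | ∀ p ∈ P, x * p ∈ idealProd P P} ⊆ (P : Set N)) :
    gr.IsGradedPrime P := by
  obtain ⟨hPg, hap⟩ := hap
  refine ⟨hPg, fun I J hI hJ hIJ => ?_⟩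
  set K : NearRingIdeal N := nearRingIdealSup J P with hK
  have hKg : gr.IsGradedIdeal K := isGradedIdeal_sup gr J P hJ hPg
  have hPK : ∀ p ∈ P, p ∈ K := fun p hp => AddSubgroup.mem_sup_right hp
  by_cases hsub : idealProd I K ⊆ idealProd P P
  · left
    intro i hi
    exact hcolon fun p hp => hsub ⟨i, hi, p, hPK p hp, rfl⟩
  · have hIK : idealProd I K ⊆ (P : Set N) := by
      haveI := P.normal
      rintro _ ⟨i, hi, k, hk, rfl⟩
      have hk' : k ∈ (↑(J.carrier ⊔ P.carrier) : Set N) := hk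
      rw [AddSubgroup.add_normal] at hk'
      obtain ⟨j, hj, p, hp, rfl⟩ := hk'
      have h1 : i * (j + p) - i * j ∈ P.carrier := P.quasi_left i j p hp
      have h2 : i * j ∈ P.carrier := hIJ ⟨i, hi, j, hj, rfl⟩
      have : (i * (j + p) - i * j) + i * j = i * (j + p) := sub_add_cancel _ _
      show i * (j + p) ∈ P.carrier
      rw [← this]
      exact AddSubgroup.add_mem _ h1 h2
    rcases hap I K hI hKg hIK hsub with h | h
    · exact Or.inl h
    · exact Or.inr fun j hj => h (AddSubgroup.mem_sup_left hj)
end
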